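/- Duhamel formula via injectivity: let e^{-tA} be the analytic semigroup generated by −A on V*, and let u ∈ L₂(0,T;V) ∩ H¹(0,T;V*) solve u' + Au = f with u(0) = u₀ for f ∈ L₂(0,T;V*). Then for all t ∈ [0,T], u(t) = e^{-tA}u₀ + ∫₀ᵗ e^{-(t-s)A} f(s) ds. -/

import Mathlib

open MeasureTheory intervalIntegral

/-- Duhamel formula via injectivity: if `u` solves `u' + Au = f`, `u(0) = u₀` in
the Gelfand-triple setting (here `ε : V → V*` is the embedding and `e^{-tA}` is
the injective analytic semigroup `S` generated by `-A` on `V*`), then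
`u(t) = e^{-tA} u(0) + ∫₀ᵗ e^{-(t-s)A} f(s) ds` for all `t ∈ [0,T]`. -/
theorem duhamel_formula
    {V Vd : Type*}
    [NormedAddCommGroup V] [InnerProductSpace ℂ V] [CompleteSpace V]
    [NormedAddCommGroup Vd] [InnerProductSpace ℂ Vd] [CompleteSpace Vd]
    (ε : V →L[ℂ] Vd)                 -- the embedding V ↪ V*
    (A : V →L[ℂ] Vd)                 -- the (extended) Lax–Milgram operator
    (S : ℝ → Vd →L[ℂ] Vd)            -- the semigroup e^{-tA} on V*
    (h0 : S 0 = ContinuousLinearMap.id ℂ Vd)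
    (hsg : ∀ s t : ℝ, 0 ≤ s → 0 ≤ t → S (s + t) = (S s).comp (S t))
    (hinj : ∀ t : ℝ, 0 ≤ t → Function.Injective (S t))
    (hScont : ∀ x : Vd, ContinuousOn (fun t : ℝ => S t x) (Set.Ici 0))
    -- `-A` generates `S`: d/dt S(t) εv = -S(t) Av
    (hgen : ∀ (v : V) (t : ℝ), 0 ≤ t →
      HasDerivWithinAt (fun r : ℝ => S r (ε v)) (-(S t (A v))) (Set.Ici 0) t)
    (T : ℝ) (hT : 0 < T)
    (u : ℝ → V) (f : ℝ → Vd)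
    (hf : IntervalIntegrable f volume 0 T)
    (hfi : ∀ t ∈ Set.Icc (0 : ℝ) T,
      IntervalIntegrable (fun s => S (t - s) (f s)) volume 0 t)
    -- the equation u' + Au = f in V* on [0,T]
    (heq : ∀ t ∈ Set.Icc (0 : ℝ) T,
      HasDerivWithinAt (fun s => ε (u s)) (f t - A (u t)) (Set.Icc (0 : ℝ) T) t) :
    ∀ t ∈ Set.Icc (0 : ℝ) T,
      ε (u t) = S t (ε (u 0)) + ∫ s in (0 : ℝ)..t, S (t - s) (f s) := by

  intro t ht
  obtain ⟨ht0, htT⟩ := ht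
  -- uniform bound on ‖S r‖ for r ∈ [0, t] via Banach–Steinhaus
  have hsub : Set.Icc (0:ℝ) t ⊆ Set.Ici (0:ℝ) := fun r hr => hr.1
  obtain ⟨M, hM⟩ : ∃ M : ℝ, ∀ r ∈ Set.Icc (0:ℝ) t, ∀ x : Vd, ‖S r x‖ ≤ M * ‖x‖ := by
    have hptwise : ∀ x : Vd, ∃ C, ∀ i : Set.Icc (0:ℝ) t, ‖S i x‖ ≤ C := by
      intro x
      obtain ⟨C, hC⟩ := isCompact_Icc.exists_bound_of_continuousOn ((hScont x).mono hsub)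
      exact ⟨C, fun i => hC i i.2⟩
    obtain ⟨C, hC⟩ := banach_steinhaus (g := fun i : Set.Icc (0:ℝ) t => S i) hptwise
    exact ⟨C, fun r hr x => (S r).le_of_opNorm_le (hC ⟨r, hr⟩) x⟩
  set g : ℝ → Vd := fun s => S (t - s) (ε (u s)) with hgdef
  have hmaps : Set.MapsTo (fun s : ℝ => t - s) (Set.Icc (0:ℝ) t) (Set.Icc (0:ℝ) t) := by
    intro s hs; show t - s ∈ Set.Icc (0:ℝ) t
    exact ⟨by linarith [hs.2], by linarith [hs.1]⟩
  have hderiv : ∀ s ∈ Set.Icc (0:ℝ) t,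
      HasDerivWithinAt g (S (t - s) (f s)) (Set.Icc (0:ℝ) t) s := by
    intro s hs
    have hsT : s ∈ Set.Icc (0:ℝ) T := ⟨hs.1, le_trans hs.2 htT⟩
    have hts : (0:ℝ) ≤ t - s := by linarith [hs.2]
    have hw : HasDerivWithinAt (fun r => ε (u r) - ε (u s)) (f s - A (u s))
        (Set.Icc (0:ℝ) t) s :=
      HasDerivWithinAt.sub_const _
        ((heq s hsT).mono (Set.Icc_subset_Icc le_rfl htT))
    -- derivative of s' ↦ S (t - s') (ε (u s))
    have hB : HasDerivWithinAt (fun s' : ℝ => S (t - s') (ε (u s)))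
        (S (t - s) (A (u s))) (Set.Icc (0:ℝ) t) s := by
      have h1 := hgen (u s) (t - s) hts
      have h2 : HasDerivWithinAt (fun s' : ℝ => t - s') (-1 : ℝ) (Set.Icc (0:ℝ) t) s := by
        simpa [Pi.sub_def] using ((hasDerivWithinAt_const s (Set.Icc (0:ℝ) t) t).sub
          (hasDerivWithinAt_id s (Set.Icc (0:ℝ) t)))
      have h3 := HasDerivWithinAt.scomp s h1 h2 (hmaps.mono_right hsub)
      simpa [Function.comp_def] using h3
    -- derivative of s' ↦ S (t - s') (ε (u s') - ε (u s))
    have hC : HasDerivWithinAt (fun s' : ℝ => S (t - s') (ε (u s') - ε (u s)))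
        (S (t - s) (f s - A (u s))) (Set.Icc (0:ℝ) t) s := by
      rw [hasDerivWithinAt_iff_isLittleO]
      have hw' := hasDerivWithinAt_iff_isLittleO.mp hw
      simp only [sub_self, sub_zero] at hw' ⊢
      have heqfun : (fun s' : ℝ => S (t - s') (ε (u s') - ε (u s)) - S (t - s) 0
            - (s' - s) • S (t - s) (f s - A (u s)))
          = (fun s' : ℝ => S (t - s') ((ε (u s') - ε (u s)) - (s' - s) • (f s - A (u s)))
            + (s' - s) • (S (t - s') (f s - A (u s)) - S (t - s) (f s - A (u s)))) := by
        funext s'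
        simp only [map_zero, map_sub, smul_sub, ContinuousLinearMap.map_smul_of_tower]
        abel
      rw [heqfun]
      have hpiece1 : (fun s' : ℝ =>
          S (t - s') ((ε (u s') - ε (u s)) - (s' - s) • (f s - A (u s))))
          =o[nhdsWithin s (Set.Icc (0:ℝ) t)] fun s' => s' - s := by
        refine Asymptotics.IsBigO.trans_isLittleO ?_ hw'
        refine Asymptotics.IsBigO.of_bound M ?_
        filter_upwards [self_mem_nhdsWithin] with s' hs'
        exact hM (t - s') (hmaps hs') _
      have hpiece2 : (fun s' : ℝ =>
          (s' - s) • (S (t - s') (f s - A (u s)) - S (t - s) (f s - A (u s))))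
          =o[nhdsWithin s (Set.Icc (0:ℝ) t)] fun s' => s' - s := by
        have hcw : ContinuousWithinAt (fun s' : ℝ => S (t - s') (f s - A (u s)))
            (Set.Icc (0:ℝ) t) s := by
          have hout : ContinuousWithinAt (fun r : ℝ => S r (f s - A (u s)))
              (Set.Ici (0:ℝ)) (t - s) := (hScont (f s - A (u s))) (t - s) hts
          exact hout.comp ((continuous_const.sub continuous_id).continuousWithinAt)
            (hmaps.mono_right hsub)
        have htend : Filter.Tendsto
            (fun s' : ℝ => S (t - s') (f s - A (u s)) - S (t - s) (f s - A (u s)))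
            (nhdsWithin s (Set.Icc (0:ℝ) t)) (nhds 0) := by
          have := hcw.tendsto.sub (tendsto_const_nhds
            (x := S (t - s) (f s - A (u s))) (f := nhdsWithin s (Set.Icc (0:ℝ) t)))
          simpa using this
        rw [Asymptotics.isLittleO_iff]
        intro c hc
        have hev := Metric.tendsto_nhds.mp htend c hc
        filter_upwards [hev] with s' hs'
        rw [dist_zero_right] at hs'
        rw [norm_smul, Real.norm_eq_abs]
        calc |s' - s| * ‖S (t - s') (f s - A (u s)) - S (t - s) (f s - A (u s))‖
            ≤ |s' - s| * c := mul_le_mul_of_nonneg_left hs'.le (abs_nonneg _)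
          _ = c * |s' - s| := mul_comm _ _
      exact hpiece1.add hpiece2
    have hsum := hC.add hB
    have hfun : (fun s' : ℝ => S (t - s') (ε (u s') - ε (u s)) + S (t - s') (ε (u s))) = g := by
      funext s'; simp [hgdef, map_sub]
    have hder : S (t - s) (f s - A (u s)) + S (t - s) (A (u s)) = S (t - s) (f s) := by
      simp [map_sub]
    simp only [Pi.add_def] at hsum
    rw [hfun, hder] at hsum
    exact hsum
  have hcont : ContinuousOn g (Set.Icc (0:ℝ) t) :=
    fun s hs => (hderiv s hs).continuousWithinAt
  have key : ∫ s in (0:ℝ)..t, S (t - s) (f s) = g t - g 0 := by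
    refine intervalIntegral.integral_eq_sub_of_hasDeriv_right_of_le ht0 hcont
      (fun x hx => ?_) (hfi t ⟨ht0, htT⟩)
    exact ((hderiv x ⟨hx.1.le, hx.2.le⟩).mono_of_mem_nhdsWithin
      (Icc_mem_nhdsGT_of_mem ⟨hx.1.le, hx.2⟩))
  have hgt : g t = ε (u t) := by simp [hgdef, h0]
  have hg0 : g 0 = S t (ε (u 0)) := by simp [hgdef]
  rw [key, hgt, hg0]
  abel
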